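/- E_{M,θ}(α) ⊂ E_θ(α): for every y ∈ E_{M,θ}(α), lim_{n→∞} (L_{n,θ}(y)·log n·log log n)/(S_{n,θ}(y) − L_{n,θ}(y)) = α. -/

import Mathlib

open Filter Real

noncomputable section

/-- The generalized Gauss map `T_θ`. -/
def gaussMap (θ : ℝ) (x : ℝ) : ℝ := if x = 0 then 0 else 1 / x - θ * ⌊1 / (θ * x)⌋

/-- The `n`-th digit (1-indexed) of the θ-expansion of `x`: `ℓ_n(x) = ⌊1/(θ·T_θ^{n−1}(x))⌋`. -/
def digit (θ : ℝ) (x : ℝ) (n : ℕ) : ℤ := ⌊1 / (θ * (gaussMap θ)^[n - 1] x)⌋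

/-- `S_{n,θ}(x)`, the sum of the first `n` digits. -/
def Sdig (θ : ℝ) (x : ℝ) (n : ℕ) : ℤ := ∑ k ∈ Finset.Icc 1 n, digit θ x k

/-- `L_{n,θ}(x)`, the maximum of the first `n` digits. -/
def Ldig (θ : ℝ) (x : ℝ) (n : ℕ) : ℤ :=
  if h : 1 ≤ n then (Finset.Icc 1 n).sup' (Finset.nonempty_Icc.mpr h) (digit θ x) else 0

/-- The ratio `L_{n,θ}(x)·log n·log log n / (S_{n,θ}(x) − L_{n,θ}(x))`. -/
def ratioFun (θ : ℝ) (x : ℝ) (n : ℕ) : ℝ :=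
  ((Ldig θ x n : ℝ) * Real.log n * Real.log (Real.log n)) /
    ((Sdig θ x n : ℝ) - (Ldig θ x n : ℝ))

/-- The level set `E_θ(α)` of irrationals in `[0,θ]` where the ratio tends to `α`. -/
def Eset (θ α : ℝ) : Set ℝ :=
  {x | x ∈ Set.Icc 0 θ ∧ Irrational x ∧
    Tendsto (fun n => ratioFun θ x n) atTop (nhds α)}

/-- The sparse sequence `n_k = ⌊exp(k^{3/4})⌋`. -/
def sparseSeq (k : ℕ) : ℕ := ⌊Real.exp ((k : ℝ) ^ ((3 : ℝ) / 4))⌋₊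

/-- The technical conditions (A), (B), (C) on the cutoff `N0`, required to hold
for every `k ≥ N0`. -/
def N0Cond (α : ℝ) (m M : ℕ) (N0 : ℕ) : Prop :=
  ∀ k : ℕ, N0 ≤ k →
    (α * m * ((sparseSeq k : ℝ) - 1) /
        (Real.log (sparseSeq k) * Real.log (Real.log (sparseSeq k))) > (M : ℝ) + 1) ∧
    (Real.log (sparseSeq (k + 1)) * Real.log (Real.log (sparseSeq (k + 1))) -
        Real.log (sparseSeq k) * Real.log (Real.log (sparseSeq k)) < α / 2) ∧
    ((sparseSeq (k + 1) : ℝ) - (sparseSeq k : ℝ) <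
        (sparseSeq k : ℝ) / (k : ℝ) ^ ((1 : ℝ) / 8))

/-- `i` is one of the insertion positions `n_k`, `k ≥ N0`. -/
def insertedPos (N0 : ℕ) (i : ℕ) : Prop := ∃ k : ℕ, N0 ≤ k ∧ i = sparseSeq k

/-- The constructed set `E_{M,θ}(α)`: irrationals in `[0,θ]` whose digit at each
insertion position `n_k` (`k ≥ N0`) equals
`⌊α·(Σ_{i=1}^{n_k−1} ℓ_i(x)) / (log n_k · log log n_k)⌋`, and whose digits at all
other positions lie in `[m, M]`. -/
def EMset (θ α : ℝ) (m M N0 : ℕ) : Set ℝ :=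
  {x | x ∈ Set.Icc 0 θ ∧ Irrational x ∧
    (∀ k : ℕ, N0 ≤ k →
      digit θ x (sparseSeq k) =
        ⌊α * (∑ i ∈ Finset.Icc 1 (sparseSeq k - 1), (digit θ x i : ℝ)) /
          (Real.log (sparseSeq k) * Real.log (Real.log (sparseSeq k)))⌋) ∧
    (∀ i : ℕ, 1 ≤ i → ¬ insertedPos N0 i →
      (m : ℤ) ≤ digit θ x i ∧ digit θ x i ≤ (M : ℤ))}

lemma sparse_one_le (k : ℕ) : 1 ≤ sparseSeq k :=
  Nat.le_floor (by exact_mod_cast Real.one_le_exp (Real.rpow_nonneg (Nat.cast_nonneg k) _))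

lemma sparse_mono : Monotone sparseSeq := fun a b hab =>
  Nat.floor_le_floor (Real.exp_le_exp.2
    (Real.rpow_le_rpow (Nat.cast_nonneg a) (Nat.cast_le.2 hab) (by norm_num)))

lemma sparse_tendsto : Tendsto sparseSeq atTop atTop :=
  tendsto_nat_floor_atTop.comp (Real.tendsto_exp_atTop.comp
    ((tendsto_rpow_atTop (by norm_num : (0:ℝ) < 3/4)).comp tendsto_natCast_atTop_atTop))

/-- `d_k = log n_k · log log n_k`. -/
def dd (k : ℕ) : ℝ := Real.log (sparseSeq k) * Real.log (Real.log (sparseSeq k))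

lemma dd_basic {α : ℝ} {m M N0 : ℕ} (hα : 0 < α) (hm : 0 < m) (hM4 : (4:ℝ) ≤ M)
    (hN0 : N0Cond α m M N0) {k : ℕ} (hk : N0 ≤ k) :
    0 < dd k ∧ 2 ≤ sparseSeq k ∧ ((M:ℝ)+1) * dd k < α * m * ((sparseSeq k : ℝ) - 1)
      ∧ 1 < Real.log (sparseSeq k) ∧ 0 < Real.log (Real.log (sparseSeq k)) := by
  have hA : α * m * ((sparseSeq k : ℝ) - 1) / dd k > (M : ℝ) + 1 := (hN0 k hk).1
  have hn1 : (1:ℝ) ≤ (sparseSeq k : ℝ) := by exact_mod_cast sparse_one_le k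
  have hnum : 0 ≤ α * m * ((sparseSeq k : ℝ) - 1) := by
    have h0 : (0:ℝ) ≤ m := Nat.cast_nonneg m
    exact mul_nonneg (mul_nonneg hα.le h0) (by linarith)
  have hdpos : 0 < dd k := by
    by_contra h
    push_neg at h
    have : α * m * ((sparseSeq k : ℝ) - 1) / dd k ≤ 0 := div_nonpos_of_nonneg_of_nonpos hnum h
    linarith
  have hlog0 : 0 ≤ Real.log (sparseSeq k) := Real.log_nonneg hn1
  have hlogpos : 0 < Real.log (sparseSeq k) := by
    rcases hlog0.lt_or_eq with h | h
    · exact h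
    · exfalso; rw [dd, ← h] at hdpos; simp at hdpos
  have hllogpos : 0 < Real.log (Real.log (sparseSeq k)) := by
    by_contra h
    push_neg at h
    have : dd k ≤ 0 := mul_nonpos_of_nonneg_of_nonpos hlog0 h
    linarith
  have hlog1 : 1 < Real.log (sparseSeq k) := by
    by_contra h
    push_neg at h
    have : Real.log (Real.log (sparseSeq k)) ≤ 0 := Real.log_nonpos (le_of_lt ?_) h
    · linarith
    · linarith
  have h2 : 2 ≤ sparseSeq k := by
    have h1' : (1:ℝ) < (sparseSeq k : ℝ) := by
      by_contra h
      push_neg at h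
      have := Real.log_nonpos (by linarith) h
      linarith
    have : 1 < sparseSeq k := by exact_mod_cast h1'
    omega
  refine ⟨hdpos, h2, ?_, hlog1, hllogpos⟩
  exact (lt_div_iff₀ hdpos).1 hA
set_option maxHeartbeats 2000000 in
/-- `E_{M,θ}(α) ⊂ E_θ(α)`: for every `y ∈ E_{M,θ}(α)` the ratio
`L_{n,θ}(y)·log n·log log n / (S_{n,θ}(y) − L_{n,θ}(y))` tends to `α`. -/
theorem EMset_subset_levelSet (θ : ℝ) (m : ℕ) (hm : 0 < m) (hmns : ¬ IsSquare m)
    (hθ : θ ∈ Set.Ioo (0 : ℝ) 1) (hθirr : Irrational θ) (hθ2 : θ ^ 2 = 1 / m)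
    (α : ℝ) (hα : 0 < α) (M : ℕ) (hM : 2 * m + 1 < M)
    (N0 : ℕ) (hN0 : N0Cond α m M N0)
    (y : ℝ) (hy : y ∈ EMset θ α m M N0) :
    Tendsto (fun n => ratioFun θ y n) atTop (nhds α) := by
  obtain ⟨-, -, hins0, hbdd⟩ := hy
  have hm1 : (1:ℝ) ≤ m := by exact_mod_cast hm
  have hmM : m ≤ M := by omega
  have hM4 : (4:ℝ) ≤ (M:ℝ) := by
    have : 4 ≤ M := by omega
    exact_mod_cast this
  have hb : ∀ k, N0 ≤ k → 0 < dd k ∧ 2 ≤ sparseSeq k ∧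
      ((M:ℝ)+1) * dd k < α * m * ((sparseSeq k : ℝ) - 1)
      ∧ 1 < Real.log (sparseSeq k) ∧ 0 < Real.log (Real.log (sparseSeq k)) :=
    fun k hk => dd_basic hα hm hM4 hN0 hk
  have hins : ∀ k : ℕ, N0 ≤ k →
      digit θ y (sparseSeq k) = ⌊α * ((Sdig θ y (sparseSeq k - 1) : ℤ) : ℝ) / dd k⌋ := by
    intro k hk
    rw [hins0 k hk]
    congr 2
    rw [Sdig]
    push_cast
    ring
  have hsplit : ∀ a b : ℕ, a ≤ b →
      Sdig θ y b = Sdig θ y a + ∑ j ∈ Finset.Ioc a b, digit θ y j := by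
    intro a b hab
    have e : ∀ n : ℕ, Finset.Icc 1 n = Finset.Ioc 0 n := fun n => by
      rw [← Finset.Icc_add_one_left_eq_Ioc, zero_add]
    rw [Sdig, Sdig, e, e]
    exact (Finset.sum_Ioc_consecutive _ (Nat.zero_le a) hab).symm
  have hstep : ∀ n : ℕ, 1 ≤ n → Sdig θ y n = Sdig θ y (n-1) + digit θ y n := by
    intro n hn
    have h := hsplit (n-1) n (by omega)
    have e : Finset.Ioc (n-1) n = {n} := by
      ext j; simp only [Finset.mem_Ioc, Finset.mem_singleton]; omega
    rw [h, e, Finset.sum_singleton]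
  -- all digits are at least m
  have hdig_ge : ∀ i : ℕ, 1 ≤ i → (m:ℤ) ≤ digit θ y i := by
    intro i
    induction i using Nat.strong_induction_on with
    | _ i IH =>
      intro hi1
      by_cases hip : insertedPos N0 i
      · obtain ⟨k, hk, hik⟩ := hip
        subst hik
        obtain ⟨hd, h2, hA, -, -⟩ := hb k hk
        have hSlb : (m:ℤ) * ((sparseSeq k - 1 : ℕ):ℤ) ≤ Sdig θ y (sparseSeq k - 1) := by
          have h := Finset.card_nsmul_le_sum (Finset.Icc 1 (sparseSeq k - 1)) (digit θ y) (m:ℤ)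
            (fun j hj => IH j (by
              have := (Finset.mem_Icc.1 hj).2
              omega) (Finset.mem_Icc.1 hj).1)
          rw [Nat.card_Icc, nsmul_eq_mul] at h
          rw [Sdig]
          have e : (sparseSeq k - 1) + 1 - 1 = sparseSeq k - 1 := by omega
          rw [e] at h
          linarith [h]
        have hSlbR : (m:ℝ) * ((sparseSeq k:ℝ) - 1) ≤ ((Sdig θ y (sparseSeq k - 1) : ℤ):ℝ) := by
          have h1 : ((sparseSeq k - 1 : ℕ):ℝ) = (sparseSeq k:ℝ) - 1 := by
            have : 1 ≤ sparseSeq k := by omega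
            push_cast [this]
            ring
          have h2 : ((m:ℝ)) * ((sparseSeq k - 1 : ℕ):ℝ) ≤ ((Sdig θ y (sparseSeq k - 1) : ℤ):ℝ) := by
            exact_mod_cast hSlb
          rw [h1] at h2
          exact h2
        rw [hins k hk, Int.le_floor]
        have hgoal : (m:ℝ) ≤ α * ((Sdig θ y (sparseSeq k - 1) : ℤ):ℝ) / dd k := by
          rw [le_div_iff₀ hd]
          have hmM' : (m:ℝ) ≤ (M:ℝ) + 1 := by
            have : (m:ℝ) ≤ (M:ℝ) := by exact_mod_cast hmM
            linarith
          have hp1 := mul_le_mul_of_nonneg_left hSlbR hα.le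
          have hp2 := mul_nonneg (show (0:ℝ) ≤ (M:ℝ)+1-(m:ℝ) by linarith) hd.le
          linarith only [hp1, hp2, hA, hmM']
        exact_mod_cast hgoal
      · exact (hbdd i hi1 hip).1
  -- S lower bound
  have hS_ge : ∀ n : ℕ, (m:ℤ) * n ≤ Sdig θ y n := by
    intro n
    have h := Finset.card_nsmul_le_sum (Finset.Icc 1 n) (digit θ y) (m:ℤ)
      (fun j hj => hdig_ge j (Finset.mem_Icc.1 hj).1)
    rw [Nat.card_Icc, nsmul_eq_mul] at h
    have e : n + 1 - 1 = n := by omega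
    rw [e] at h
    rw [Sdig]
    linarith [h]
  have hS_geR : ∀ k : ℕ, N0 ≤ k →
      (m:ℝ) * ((sparseSeq k:ℝ) - 1) ≤ ((Sdig θ y (sparseSeq k - 1) : ℤ):ℝ) := by
    intro k hk
    obtain ⟨-, h2, -, -, -⟩ := hb k hk
    have h := hS_ge (sparseSeq k - 1)
    have h1 : ((sparseSeq k - 1 : ℕ):ℝ) = (sparseSeq k:ℝ) - 1 := by
      have : 1 ≤ sparseSeq k := by omega
      push_cast [this]
      ring
    have h2' : ((m:ℝ)) * ((sparseSeq k - 1 : ℕ):ℝ) ≤ ((Sdig θ y (sparseSeq k - 1) : ℤ):ℝ) := by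
      exact_mod_cast h
    rw [h1] at h2'
    exact h2'
  have hkey : ∀ k, N0 ≤ k →
      ((M:ℝ)+1) * dd k < α * ((Sdig θ y (sparseSeq k - 1) : ℤ):ℝ) := by
    intro k hk
    obtain ⟨hd, h2, hA, -, -⟩ := hb k hk
    have hp1 := mul_le_mul_of_nonneg_left (hS_geR k hk) hα.le
    linarith only [hp1, hA]
  have hins_lb : ∀ k, N0 ≤ k → ((M:ℤ)+1) ≤ digit θ y (sparseSeq k) := by
    intro k hk
    obtain ⟨hd, -, -, -, -⟩ := hb k hk
    rw [hins k hk, Int.le_floor]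
    have : ((M:ℝ)+1) ≤ α * ((Sdig θ y (sparseSeq k - 1) : ℤ):ℝ) / dd k := by
      rw [le_div_iff₀ hd]
      linarith [hkey k hk]
    exact_mod_cast this
  have hfloor_ub : ∀ k, N0 ≤ k →
      ((digit θ y (sparseSeq k) : ℤ):ℝ) ≤ α * ((Sdig θ y (sparseSeq k - 1) : ℤ):ℝ) / dd k := by
    intro k hk
    rw [hins k hk]
    exact Int.floor_le _
  have hfloor_lb : ∀ k, N0 ≤ k →
      α * ((Sdig θ y (sparseSeq k - 1) : ℤ):ℝ) / dd k - 1 < ((digit θ y (sparseSeq k) : ℤ):ℝ) := by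
    intro k hk
    rw [hins k hk]
    exact Int.sub_one_lt_floor _
  -- monotonicity of inserted digits
  have hmono1 : ∀ k, N0 ≤ k → digit θ y (sparseSeq k) ≤ digit θ y (sparseSeq (k+1)) := by
    intro k hk
    obtain ⟨hd1, h21, hA1, -, -⟩ := hb k hk
    obtain ⟨hd2, h22, hA2, -, -⟩ := hb (k+1) (by omega)
    rcases eq_or_lt_of_le (sparse_mono (Nat.le_add_right k 1)) with he | hlt
    · have hdd : dd (k+1) = dd k := by rw [dd, dd, ← he]
      rw [hins k hk, hins (k+1) (by omega), hdd, ← he]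
    · rw [hins k hk, hins (k+1) (by omega)]
      apply Int.floor_le_floor
      rw [div_le_div_iff₀ hd1 hd2]
      set S1 : ℝ := ((Sdig θ y (sparseSeq k - 1) : ℤ):ℝ) with hS1d
      set S2 : ℝ := ((Sdig θ y (sparseSeq (k+1) - 1) : ℤ):ℝ) with hS2d
      set L1 : ℝ := ((digit θ y (sparseSeq k) : ℤ):ℝ) with hL1d
      have hS2 : S1 + L1 ≤ S2 := by
        have e1 : Sdig θ y (sparseSeq (k+1) - 1) =
            Sdig θ y (sparseSeq k) + ∑ j ∈ Finset.Ioc (sparseSeq k) (sparseSeq (k+1) - 1), digit θ y j :=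
          hsplit (sparseSeq k) (sparseSeq (k+1) - 1) (by omega)
        have e2 : Sdig θ y (sparseSeq k) = Sdig θ y (sparseSeq k - 1) + digit θ y (sparseSeq k) :=
          hstep (sparseSeq k) (by omega)
        have e3 : (0:ℤ) ≤ ∑ j ∈ Finset.Ioc (sparseSeq k) (sparseSeq (k+1) - 1), digit θ y j :=
          Finset.sum_nonneg (fun j hj => le_trans (by positivity)
            (hdig_ge j (by
              have := (Finset.mem_Ioc.1 hj).1
              omega)))
        have : Sdig θ y (sparseSeq k - 1) + digit θ y (sparseSeq k) ≤ Sdig θ y (sparseSeq (k+1) - 1) := by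
          rw [e1, e2]; linarith
        rw [hS1d, hS2d, hL1d]
        exact_mod_cast this
      have hkeyk := hkey k hk
      have hS1pos : 0 < S1 := by
        have hp1 := mul_pos (show (0:ℝ) < (M:ℝ)+1 by linarith) hd1
        nlinarith only [hkeyk, hα, hp1]
      have hB : dd (k+1) - dd k < α / 2 := (hN0 k hk).2.1
      have hL1 := hfloor_lb k hk
      have h_c : α * (α * S1 - dd k) < α * (L1 * dd k) := by
        have : α * S1 - dd k < L1 * dd k := by
          have h := mul_lt_mul_of_pos_right hL1 hd1
          rw [sub_mul, div_mul_cancel₀ _ hd1.ne'] at h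
          linarith
        exact mul_lt_mul_of_pos_left this hα
      have h_b : α * (S1 + L1) * dd k ≤ α * S2 * dd k :=
        mul_le_mul_of_nonneg_right (mul_le_mul_of_nonneg_left hS2 hα.le) hd1.le
      have h_a : α * S1 * (dd (k+1) - dd k) < α * S1 * (α/2) :=
        mul_lt_mul_of_pos_left hB (mul_pos hα hS1pos)
      have h_d : 0 < α * (α * S1 - 2 * dd k) := by
        apply mul_pos hα
        have hp1 := mul_pos (show (0:ℝ) < (M:ℝ)+1 by linarith) hd1
        have hp2 := mul_nonneg (show (0:ℝ) ≤ (M:ℝ)-1 by linarith) hd1.le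
        linarith only [hkeyk, hp1, hp2]
      nlinarith only [h_a, h_b, h_c, h_d]
  have hmono : ∀ a b, N0 ≤ a → a ≤ b → digit θ y (sparseSeq a) ≤ digit θ y (sparseSeq b) := by
    intro a b ha hab
    induction b, hab using Nat.le_induction with
    | base => exact le_refl _
    | succ b hab IH => exact le_trans IH (hmono1 b (le_trans ha hab))
  -- identification of the maximum
  have hLdig : ∀ K n : ℕ, N0 ≤ K → sparseSeq K ≤ n → n < sparseSeq (K+1) →
      Ldig θ y n = digit θ y (sparseSeq K) := by
    intro K n hK hKn hnK
    have h2K : 2 ≤ sparseSeq K := (hb K hK).2.1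
    have hn1 : 1 ≤ n := by omega
    rw [Ldig, dif_pos hn1]
    apply le_antisymm
    · apply Finset.sup'_le
      intro j hj
      obtain ⟨hj1, hjn⟩ := Finset.mem_Icc.1 hj
      by_cases hip : insertedPos N0 j
      · obtain ⟨k, hk, rfl⟩ := hip
        have hkK : k ≤ K := by
          by_contra h
          push_neg at h
          have : sparseSeq (K+1) ≤ sparseSeq k := sparse_mono (by omega)
          omega
        exact hmono k K hk hkK
      · have h1 := (hbdd j hj1 hip).2
        have h2 := hins_lb K hK
        omega
    · exact Finset.le_sup' (digit θ y) (Finset.mem_Icc.2 ⟨by omega, hKn⟩)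
  -- digits in the gaps are at most M
  have hgap : ∀ K n : ℕ, N0 ≤ K → n < sparseSeq (K+1) →
      ∀ j, sparseSeq K < j → j ≤ n → digit θ y j ≤ (M:ℤ) := by
    intro K n hK hnK j hj1 hj2
    have h2K : 2 ≤ sparseSeq K := (hb K hK).2.1
    have hjip : ¬ insertedPos N0 j := by
      rintro ⟨k, hk, rfl⟩
      rcases le_or_gt k K with h | h
      · have := sparse_mono h; omega
      · have : sparseSeq (K+1) ≤ sparseSeq k := sparse_mono h; omega
    exact (hbdd j (by omega) hjip).2
  -- asymptotics
  have hlogn : Tendsto (fun k => Real.log (sparseSeq k)) atTop atTop :=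
    Real.tendsto_log_atTop.comp (tendsto_natCast_atTop_atTop.comp sparse_tendsto)
  have hdd_top : Tendsto dd atTop atTop :=
    hlogn.atTop_mul_atTop₀ (Real.tendsto_log_atTop.comp hlogn)
  have hrE3 : Tendsto (fun k : ℕ => ((k:ℝ)) ^ ((1:ℝ)/8)) atTop atTop :=
    (tendsto_rpow_atTop (by norm_num)).comp tendsto_natCast_atTop_atTop
  rw [Metric.tendsto_atTop]
  intro ε hε
  have hE1 : ∀ᶠ k in atTop, α^2/ε < dd k := hdd_top.eventually_gt_atTop _
  have hE2 : ∀ᶠ k in atTop, dd k / (m * ((sparseSeq k:ℝ) - 1)) < ε/4 := by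
    have h0 : Tendsto (fun x:ℝ => Real.log x ^ 2 / ((m:ℝ) * x + -(m:ℝ))) atTop (nhds 0) :=
      Real.tendsto_pow_log_div_mul_add_atTop (m:ℝ) (-(m:ℝ)) 2 (by positivity)
    have h1 : Tendsto (fun k : ℕ => Real.log (sparseSeq k) ^ 2 / ((m:ℝ) * (sparseSeq k:ℝ) + -(m:ℝ)))
        atTop (nhds 0) := h0.comp (tendsto_natCast_atTop_atTop.comp sparse_tendsto)
    have h2 : ∀ᶠ k in atTop, Real.log (sparseSeq k) ^ 2 / ((m:ℝ) * (sparseSeq k:ℝ) + -(m:ℝ)) < ε/4 :=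
      h1.eventually_lt_const (by positivity)
    filter_upwards [h2, sparse_tendsto.eventually_ge_atTop 2] with k hk h2k
    have hn2 : (2:ℝ) ≤ (sparseSeq k:ℝ) := by exact_mod_cast h2k
    have hlog0 : (0:ℝ) ≤ Real.log (sparseSeq k) := Real.log_nonneg (by linarith)
    have hdd_ub : dd k ≤ Real.log (sparseSeq k) ^ 2 := by
      calc dd k ≤ Real.log (sparseSeq k) * Real.log (sparseSeq k) :=
            mul_le_mul_of_nonneg_left (Real.log_le_self hlog0) hlog0
        _ = Real.log (sparseSeq k) ^ 2 := by ring
    have hden : (0:ℝ) < (m:ℝ) * ((sparseSeq k:ℝ) - 1) :=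
      mul_pos (by exact_mod_cast hm) (by linarith only [hn2])
    have e : (m:ℝ) * (sparseSeq k:ℝ) + -(m:ℝ) = (m:ℝ) * ((sparseSeq k:ℝ) - 1) := by ring
    rw [e] at hk
    rw [div_lt_iff₀ hden] at hk ⊢
    linarith
  have hE3 : ∀ᶠ k : ℕ in atTop,
      α * (2*(M:ℝ)/((m:ℝ)*(k:ℝ)^((1:ℝ)/8))) < ε/4 ∧ 0 < (k:ℝ)^((1:ℝ)/8) := by
    filter_upwards [hrE3.eventually_gt_atTop (8*α*(M:ℝ)/((m:ℝ)*ε)),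
      hrE3.eventually_gt_atTop 0] with k hk h0
    refine ⟨?_, h0⟩
    have hmε : (0:ℝ) < (m:ℝ)*ε := by positivity
    have h8 : 8*α*(M:ℝ) < (k:ℝ)^((1:ℝ)/8) * ((m:ℝ)*ε) := (div_lt_iff₀ hmε).1 hk
    have hden : (0:ℝ) < (m:ℝ)*(k:ℝ)^((1:ℝ)/8) := by positivity
    rw [show α * (2*(M:ℝ)/((m:ℝ)*(k:ℝ)^((1:ℝ)/8))) = (2*α*(M:ℝ))/((m:ℝ)*(k:ℝ)^((1:ℝ)/8)) by ring]
    rw [div_lt_iff₀ hden]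
    linarith only [h8]
  obtain ⟨k0, hk0⟩ := eventually_atTop.1 ((eventually_ge_atTop N0).and (hE1.and (hE2.and hE3)))
  refine ⟨sparseSeq k0, fun n hn => ?_⟩
  obtain ⟨B0, hB0⟩ := eventually_atTop.1 (sparse_tendsto.eventually_gt_atTop n)
  have hk0B : k0 ≤ max B0 k0 := le_max_right _ _
  have hPB : n < sparseSeq (max B0 k0) := hB0 _ (le_max_left _ _)
  set K := Nat.findGreatest (fun k => sparseSeq k ≤ n) (max B0 k0) with hKdef
  have hKP : sparseSeq K ≤ n := Nat.findGreatest_spec (P := fun k => sparseSeq k ≤ n) hk0B hn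
  have hk0K : k0 ≤ K := Nat.le_findGreatest (P := fun k => sparseSeq k ≤ n) hk0B hn
  have hKB : K ≤ max B0 k0 := Nat.findGreatest_le _
  have hKsucc : n < sparseSeq (K+1) := by
    rcases Nat.lt_or_ge K (max B0 k0) with h | h
    · by_contra hcon
      push_neg at hcon
      exact Nat.findGreatest_is_greatest (Nat.lt_succ_self K) (by omega) hcon
    · have he : K = max B0 k0 := le_antisymm hKB h
      rw [he] at hKP
      omega
  obtain ⟨hKN0, hE1K, hE2K, hE3K, hrposK⟩ := hk0 K hk0K
  obtain ⟨hdK, h2K, hAK, hlogK, hllogK⟩ := hb K hKN0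
  have hLD := hLdig K n hKN0 hKP hKsucc
  have hkeyK := hkey K hKN0
  have hSmK := hS_geR K hKN0
  have hn2K : (2:ℝ) ≤ (sparseSeq K:ℝ) := by exact_mod_cast h2K
  set S : ℝ := ((Sdig θ y (sparseSeq K - 1) : ℤ):ℝ) with hSdef
  set L : ℝ := ((digit θ y (sparseSeq K) : ℤ):ℝ) with hLdef2
  have hSpos : 0 < S := by
    have hp1 := mul_pos (show (0:ℝ) < (M:ℝ)+1 by linarith) hdK
    nlinarith only [hkeyK, hα, hp1]
  have hL_ub : L ≤ α * S / dd K := hfloor_ub K hKN0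
  have hL_lb : α * S / dd K - 1 < L := hfloor_lb K hKN0
  have hL_M : (M:ℝ) + 1 ≤ L := by
    have h := hins_lb K hKN0
    rw [hLdef2]
    exact_mod_cast h
  have hL0 : 0 ≤ L := by linarith
  -- bounds on log n * log log n
  have hncast : (sparseSeq K : ℝ) ≤ (n:ℝ) := by exact_mod_cast hKP
  have hncast2 : (n:ℝ) ≤ (sparseSeq (K+1) : ℝ) := by exact_mod_cast (le_of_lt hKsucc)
  have hlogn_lb : Real.log (sparseSeq K) ≤ Real.log n :=
    Real.log_le_log (by linarith) hncast
  have hllog_lb : Real.log (Real.log (sparseSeq K)) ≤ Real.log (Real.log n) :=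
    Real.log_le_log (by linarith) hlogn_lb
  have hDn_lb : dd K ≤ Real.log n * Real.log (Real.log n) :=
    mul_le_mul hlogn_lb hllog_lb hllogK.le (by linarith)
  have hB' : dd (K+1) - dd K < α/2 := (hN0 K hKN0).2.1
  have hlogn_ub : Real.log n ≤ Real.log (sparseSeq (K+1)) :=
    Real.log_le_log (by linarith) hncast2
  have hllog_ub : Real.log (Real.log n) ≤ Real.log (Real.log (sparseSeq (K+1))) :=
    Real.log_le_log (by linarith) hlogn_ub
  have hDn_ub : Real.log n * Real.log (Real.log n) ≤ dd K + α/2 := by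
    have h1 : Real.log n * Real.log (Real.log n) ≤ dd (K+1) :=
      mul_le_mul hlogn_ub hllog_ub (by linarith) (by linarith)
    linarith
  -- decomposition of Sdig n
  have hdecI : Sdig θ y n = Sdig θ y (sparseSeq K - 1) + digit θ y (sparseSeq K)
      + ∑ j ∈ Finset.Ioc (sparseSeq K) n, digit θ y j := by
    rw [hsplit (sparseSeq K) n hKP, hstep (sparseSeq K) (by omega)]
  set R : ℤ := ∑ j ∈ Finset.Ioc (sparseSeq K) n, digit θ y j with hRdef
  have hR0 : (0:ℤ) ≤ R := by
    rw [hRdef]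
    exact Finset.sum_nonneg fun j hj => le_trans (by positivity)
      (hdig_ge j (by have := (Finset.mem_Ioc.1 hj).1; omega))
  have hRub : R ≤ (M:ℤ) * ((n - sparseSeq K : ℕ):ℤ) := by
    have h := Finset.sum_le_card_nsmul (Finset.Ioc (sparseSeq K) n) (digit θ y) (M:ℤ)
      (fun j hj => hgap K n hKN0 hKsucc j (Finset.mem_Ioc.1 hj).1 (Finset.mem_Ioc.1 hj).2)
    rw [Nat.card_Ioc, nsmul_eq_mul] at h
    rw [hRdef]
    linarith [h]
  have hGr : ((n - sparseSeq K : ℕ):ℝ) < (sparseSeq K:ℝ)/(K:ℝ)^((1:ℝ)/8) := by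
    have e : ((n - sparseSeq K : ℕ):ℝ) = (n:ℝ) - (sparseSeq K:ℝ) := by
      push_cast [hKP]
      ring
    have hC := (hN0 K hKN0).2.2
    have hlt : (n:ℝ) < (sparseSeq (K+1):ℝ) := by exact_mod_cast hKsucc
    rw [e]
    linarith
  set t : ℝ := (K:ℝ)^((1:ℝ)/8) with htdef
  set δ : ℝ := 2*(M:ℝ)/((m:ℝ)*t) with hδdef
  have htpos : 0 < t := hrposK
  have hδ0 : 0 ≤ δ := by
    rw [hδdef]
    positivity
  have hRr : (R:ℝ) ≤ δ * S := by
    have h1 : (R:ℝ) ≤ (M:ℝ) * ((n - sparseSeq K : ℕ):ℝ) := by exact_mod_cast hRub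
    have h2 : (M:ℝ) * ((n - sparseSeq K:ℕ):ℝ) ≤ (M:ℝ) * ((sparseSeq K:ℝ)/t) :=
      mul_le_mul_of_nonneg_left hGr.le (by linarith)
    have h4 : (M:ℝ)*(sparseSeq K:ℝ) ≤ 2*(M:ℝ)*((sparseSeq K:ℝ)-1) := by
      have hp1 := mul_nonneg (show (0:ℝ) ≤ (M:ℝ) by linarith) (show (0:ℝ) ≤ (sparseSeq K:ℝ)-2 by linarith only [hn2K])
      linarith only [hp1]
    have h3 : (M:ℝ) * ((sparseSeq K:ℝ)/t) ≤ δ * ((m:ℝ)*((sparseSeq K:ℝ)-1)) := by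
      have e : δ * ((m:ℝ)*((sparseSeq K:ℝ)-1)) = 2*(M:ℝ)*((sparseSeq K:ℝ)-1)/t := by
        rw [hδdef]
        field_simp
      rw [e, show (M:ℝ) * ((sparseSeq K:ℝ)/t) = (M:ℝ)*(sparseSeq K:ℝ)/t by ring]
      exact (div_le_div_iff_of_pos_right htpos).2 h4
    have h5 : δ * ((m:ℝ)*((sparseSeq K:ℝ)-1)) ≤ δ * S := mul_le_mul_of_nonneg_left hSmK hδ0
    linarith
  have hTeq : (Sdig θ y n : ℝ) - L = S + (R:ℝ) := by
    rw [hSdef, hLdef2, hdecI, hRdef]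
    push_cast
    ring
  have hT1 : S ≤ (Sdig θ y n:ℝ) - L := by
    have h0 : (0:ℝ) ≤ (R:ℝ) := by exact_mod_cast hR0
    rw [hTeq]
    linarith
  have hTub : (Sdig θ y n:ℝ) - L ≤ S*(1+δ) := by
    rw [hTeq]
    linarith only [hRr]
  have hTpos : 0 < (Sdig θ y n:ℝ) - L := lt_of_lt_of_le hSpos hT1
  have hratio : ratioFun θ y n = (L * Real.log n * Real.log (Real.log n)) / ((Sdig θ y n:ℝ) - L) := by
    rw [ratioFun, hLD, ← hLdef2]
  have hεd : α^2 < ε * dd K := by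
    rw [div_lt_iff₀ hε] at hE1K
    linarith
  have hup : ratioFun θ y n ≤ α + ε/2 := by
    rw [hratio, div_le_iff₀ hTpos]
    have h1 : L * (Real.log n * Real.log (Real.log n)) ≤ (α*S/dd K) * (dd K + α/2) :=
      mul_le_mul hL_ub hDn_ub (le_trans hdK.le hDn_lb)
        (div_nonneg (mul_nonneg hα.le hSpos.le) hdK.le)
    have h2 : (α*S/dd K) * (dd K + α/2) = α*S + (α^2/(2*dd K))*S := by
      field_simp
    have h3 : (α^2/(2*dd K))*S ≤ (ε/2)*S := by
      apply mul_le_mul_of_nonneg_right _ hSpos.le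
      rw [div_le_iff₀ (by positivity)]
      linarith
    have h4 : (α + ε/2)*S ≤ (α + ε/2)*((Sdig θ y n:ℝ) - L) :=
      mul_le_mul_of_nonneg_left hT1 (by linarith)
    calc L * Real.log n * Real.log (Real.log n)
        = L * (Real.log n * Real.log (Real.log n)) := by ring
      _ ≤ (α*S/dd K) * (dd K + α/2) := h1
      _ = α*S + (α^2/(2*dd K))*S := h2
      _ ≤ α*S + (ε/2)*S := by linarith
      _ = (α + ε/2)*S := by ring
      _ ≤ (α + ε/2)*((Sdig θ y n:ℝ) - L) := h4
  have hlow : α - ε/2 ≤ ratioFun θ y n := by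
    rcases le_or_gt α (ε/2) with hcase | hcase
    · have h0 : 0 ≤ ratioFun θ y n := by
        rw [hratio]
        apply div_nonneg _ hTpos.le
        have h00 : 0 ≤ Real.log n * Real.log (Real.log n) := le_trans hdK.le hDn_lb
        calc (0:ℝ) = L * 0 := by ring
          _ ≤ L * (Real.log n * Real.log (Real.log n)) := mul_le_mul_of_nonneg_left h00 hL0
          _ = L * Real.log n * Real.log (Real.log n) := by ring
      linarith
    · rw [hratio, le_div_iff₀ hTpos]
      have hdS : dd K < (ε/4)*S := by
        have hden : (0:ℝ) < (m:ℝ)*((sparseSeq K:ℝ)-1) :=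
          mul_pos (by exact_mod_cast hm) (by linarith only [hn2K])
        rw [div_lt_iff₀ hden] at hE2K
        have hp1 := mul_le_mul_of_nonneg_left hSmK (show (0:ℝ) ≤ ε/4 by linarith only [hε])
        linarith only [hE2K, hp1]
      have hαδ : α * δ < ε/4 := hE3K
      have h1 : (α*S/dd K - 1) * dd K ≤ L * dd K :=
        mul_le_mul_of_nonneg_right hL_lb.le hdK.le
      have h2 : (α*S/dd K - 1) * dd K = α*S - dd K := by
        field_simp
      have h3 : L * dd K ≤ L * (Real.log n * Real.log (Real.log n)) :=
        mul_le_mul_of_nonneg_left hDn_lb hL0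
      have h4 : (α - ε/2) * ((Sdig θ y n:ℝ) - L) ≤ (α - ε/2)*(S*(1+δ)) :=
        mul_le_mul_of_nonneg_left hTub (by linarith)
      have h5 : (α - ε/2)*(S*(1+δ)) ≤ α*S - dd K := by
        have hp1 := mul_lt_mul_of_pos_right hαδ hSpos
        have hp2 := mul_nonneg (mul_nonneg hε.le hδ0) hSpos.le
        linarith only [hp1, hp2, hdS]
      calc (α - ε/2) * ((Sdig θ y n:ℝ) - L) ≤ (α - ε/2)*(S*(1+δ)) := h4
        _ ≤ α*S - dd K := h5
        _ = (α*S/dd K - 1) * dd K := h2.symm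
        _ ≤ L * dd K := h1
        _ ≤ L * (Real.log n * Real.log (Real.log n)) := h3
        _ = L * Real.log n * Real.log (Real.log n) := by ring
  rw [Real.dist_eq]
  have habs : |ratioFun θ y n - α| ≤ ε/2 := abs_le.2 ⟨by linarith, by linarith⟩
  linarith
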